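/- A Borel measurable function α : [1,∞) → (0,∞) belongs to the class RO if and only if it admits a representation α(t) = exp(β(t) + ∫₁ᵗ γ(τ)/τ dτ) for all t ≥ 1, where β, γ : [1,∞) → ℝ are Borel measurable bounded functions. -/

import Mathlib

/-- A Borel measurable function `α : [1,∞) → (0,∞)` belongs to the class RO if there
exist `b > 1` and `c ≥ 1` such that `c⁻¹ ≤ α (λ t) / α t ≤ c` for all `t ≥ 1`,
`λ ∈ [1, b]`. -/
def IsRO (α : ℝ → ℝ) : Prop :=
  Measurable (fun t : Set.Ici (1 : ℝ) => α t.1) ∧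
  (∀ t : ℝ, 1 ≤ t → 0 < α t) ∧
  ∃ b : ℝ, 1 < b ∧ ∃ c : ℝ, 1 ≤ c ∧ ∀ t : ℝ, 1 ≤ t → ∀ l : ℝ, 1 ≤ l → l ≤ b →
    c⁻¹ ≤ α (l * t) / α t ∧ α (l * t) / α t ≤ c

section Helpers
open MeasureTheory intervalIntegral Set

lemma intInt_of_bound {f : ℝ → ℝ} (hf : Measurable f) {a b C : ℝ}
    (hC : ∀ x ∈ Set.uIoc a b, |f x| ≤ C) : IntervalIntegrable f volume a b := by
  refine (_root_.intervalIntegrable_const (c := C)).mono_fun' hf.aestronglyMeasurable.restrict ?_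
  exact ae_restrict_of_forall_mem measurableSet_uIoc (by intro x hx; simpa using hC x hx)

lemma iter_bound {α : ℝ → ℝ} {b c : ℝ} (hb : 1 < b) (hc : 1 ≤ c)
    (hpos : ∀ t : ℝ, 1 ≤ t → 0 < α t)
    (hRO : ∀ t : ℝ, 1 ≤ t → ∀ l : ℝ, 1 ≤ l → l ≤ b →
      c⁻¹ ≤ α (l * t) / α t ∧ α (l * t) / α t ≤ c) :
    ∀ m : ℕ, ∀ t : ℝ, 1 ≤ t → ∀ l : ℝ, 1 ≤ l → l ≤ b ^ m →
      |Real.log (α (l * t)) - Real.log (α t)| ≤ m * Real.log c := by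
  have step : ∀ t : ℝ, 1 ≤ t → ∀ l : ℝ, 1 ≤ l → l ≤ b →
      |Real.log (α (l * t)) - Real.log (α t)| ≤ Real.log c := by
    intro t ht l hl1 hlb
    have hlt : (1:ℝ) ≤ l * t := by nlinarith
    have h1 := hpos t ht
    have h2 := hpos (l * t) hlt
    have h := hRO t ht l hl1 hlb
    have hrpos : 0 < α (l * t) / α t := by positivity
    have hlog : Real.log (α (l * t) / α t) = Real.log (α (l * t)) - Real.log (α t) :=
      Real.log_div h2.ne' h1.ne'
    rw [abs_le, ← hlog]
    constructor
    · have := Real.log_le_log (by positivity) h.1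
      rwa [Real.log_inv] at this
    · exact Real.log_le_log hrpos h.2
  intro m
  induction m with
  | zero =>
    intro t ht l hl1 hlb
    have : l = 1 := le_antisymm (by simpa using hlb) hl1
    subst this
    simp
  | succ m ih =>
    have hlogc : 0 ≤ Real.log c := Real.log_nonneg hc
    intro t ht l hl1 hlb
    by_cases hcase : l ≤ b ^ m
    · refine (ih t ht l hl1 hcase).trans ?_
      push_cast
      nlinarith
    · push_neg at hcase
      have hb0 : (0:ℝ) < b := by linarith
      have hbm1 : (1:ℝ) ≤ b ^ m := one_le_pow₀ hb.le
      have hbm0 : (0:ℝ) < b ^ m := by positivity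
      have ht' : (1:ℝ) ≤ b ^ m * t := by nlinarith
      have hl' : (1:ℝ) ≤ l / b ^ m := (one_le_div hbm0).2 hcase.le
      have hl'b : l / b ^ m ≤ b := by
        rw [div_le_iff₀ hbm0]
        calc l ≤ b ^ (m + 1) := hlb
        _ = b * b ^ m := by ring
      have heq : (l / b ^ m) * (b ^ m * t) = l * t := by
        field_simp
      have h1 := step (b ^ m * t) ht' (l / b ^ m) hl' hl'b
      rw [heq] at h1
      have h2 := ih t ht (b ^ m) hbm1 le_rfl
      have := abs_sub_le (Real.log (α (l * t))) (Real.log (α (b ^ m * t))) (Real.log (α t))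
      push_cast
      nlinarith

lemma forward_rep {α : ℝ → ℝ}
    (hmeas : Measurable (fun t : Set.Ici (1 : ℝ) => α t.1))
    (hpos : ∀ t : ℝ, 1 ≤ t → 0 < α t)
    {b c : ℝ} (hb : 1 < b) (hc : 1 ≤ c)
    (hRO : ∀ t : ℝ, 1 ≤ t → ∀ l : ℝ, 1 ≤ l → l ≤ b →
      c⁻¹ ≤ α (l * t) / α t ∧ α (l * t) / α t ≤ c) :
    ∃ β γ : ℝ → ℝ,
      Measurable (fun t : Set.Ici (1 : ℝ) => β t.1) ∧
      Measurable (fun t : Set.Ici (1 : ℝ) => γ t.1) ∧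
      (∃ Mb : ℝ, ∀ t : ℝ, 1 ≤ t → |β t| ≤ Mb) ∧
      (∃ Mg : ℝ, ∀ t : ℝ, 1 ≤ t → |γ t| ≤ Mg) ∧
      ∀ t : ℝ, 1 ≤ t → α t = Real.exp (β t + ∫ τ in (1 : ℝ)..t, γ τ / τ) := by
  classical
  have hlogc : 0 ≤ Real.log c := Real.log_nonneg hc
  have iter := iter_bound hb hc hpos hRO
  -- truncated log of α
  set L' : ℝ → ℝ := fun s => if hs : s ∈ Set.Ici (1:ℝ) then Real.log (α s) else 0 with hL'def
  have hL'meas : Measurable L' :=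
    Measurable.dite (s := Set.Ici (1:ℝ)) (Real.measurable_log.comp hmeas)
      measurable_const measurableSet_Ici
  have hL'eq : ∀ s : ℝ, 1 ≤ s → L' s = Real.log (α s) := by
    intro s hs; exact dif_pos (Set.mem_Ici.mpr hs)
  -- local bound for L'
  have L'bd : ∀ T : ℝ, ∃ C : ℝ, 0 ≤ C ∧ ∀ s : ℝ, s ≤ T → |L' s| ≤ C := by
    intro T
    obtain ⟨m, hm⟩ := pow_unbounded_of_one_lt (max T 1) hb
    refine ⟨|Real.log (α 1)| + m * Real.log c, by positivity, ?_⟩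
    intro s hs
    by_cases h1s : 1 ≤ s
    · rw [hL'eq s h1s]
      have hsb : s ≤ b ^ m := le_trans (le_trans hs (le_max_left T 1)) hm.le
      have := iter m 1 le_rfl s h1s hsb
      rw [mul_one] at this
      have := abs_sub_abs_le_abs_sub (Real.log (α s)) (Real.log (α 1))
      have habs := abs_sub_le (Real.log (α s)) (Real.log (α 1)) 0
      calc |Real.log (α s)| = |Real.log (α s) - Real.log (α 1) + Real.log (α 1)| := by ring_nf
        _ ≤ |Real.log (α s) - Real.log (α 1)| + |Real.log (α 1)| := abs_add_le _ _
        _ ≤ ↑m * Real.log c + |Real.log (α 1)| := by linarith [iter m 1 le_rfl s h1s hsb, this]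
        _ = |Real.log (α 1)| + ↑m * Real.log c := by ring
    · simp only [hL'def]
      rw [dif_neg (by simpa using h1s)]
      simp; positivity
  set E : ℝ := Real.exp 1 with hEdef
  have hE1 : (1:ℝ) < E := by
    have := Real.exp_one_gt_d9; rw [hEdef]; linarith
  have hE0 : (0:ℝ) < E := by linarith
  obtain ⟨me, hme⟩ := pow_unbounded_of_one_lt E hb
  set Me : ℝ := me * Real.log c with hMedef
  have hMe0 : 0 ≤ Me := by positivity
  -- two-point bound within ratio E
  have hMe : ∀ t s : ℝ, 1 ≤ t → t ≤ s → s ≤ E * t → |Real.log (α s) - Real.log (α t)| ≤ Me := by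
    intro t s ht hts hsEt
    have ht0 : (0:ℝ) < t := by linarith
    have hl1 : (1:ℝ) ≤ s / t := (one_le_div ht0).2 hts
    have hlb : s / t ≤ b ^ me := by
      rw [div_le_iff₀ ht0]
      nlinarith [hme.le]
    have := iter me t ht (s / t) hl1 hlb
    rwa [div_mul_cancel₀ s ht0.ne'] at this
  -- define γ
  set γ : ℝ → ℝ := (Set.Ici (1:ℝ)).indicator (fun t => L' (E * t) - L' t) with hγdef
  have hγmeas : Measurable γ :=
    ((hL'meas.comp (measurable_id.const_mul E)).sub hL'meas).indicator measurableSet_Ici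
  have hγeq : ∀ t : ℝ, 1 ≤ t → γ t = Real.log (α (E * t)) - Real.log (α t) := by
    intro t ht
    have hEt : (1:ℝ) ≤ E * t := by nlinarith
    rw [hγdef, Set.indicator_of_mem (by exact ht : t ∈ Set.Ici (1:ℝ)), hL'eq _ hEt, hL'eq _ ht]
  have hγ0 : ∀ t : ℝ, ¬ (1 ≤ t) → γ t = 0 := by
    intro t ht; rw [hγdef, Set.indicator_of_notMem (by simpa using ht)]
  have hγbd : ∀ t : ℝ, |γ t| ≤ Me := by
    intro t
    by_cases ht : 1 ≤ t
    · rw [hγeq t ht]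
      exact hMe t (E * t) ht (by nlinarith) le_rfl
    · rw [hγ0 t ht]; simpa using hMe0
  -- integrand globally bounded
  have hintbd : ∀ x : ℝ, |γ x / x| ≤ Me := by
    intro x
    by_cases hx : 1 ≤ x
    · rw [abs_div]
      calc |γ x| / |x| ≤ |γ x| := div_le_self (abs_nonneg _) (by rw [abs_of_nonneg (by linarith)]; exact hx)
        _ ≤ Me := hγbd x
    · rw [hγ0 x hx]; simpa using hMe0
  have hint : ∀ u v : ℝ, IntervalIntegrable (fun τ => γ τ / τ) volume u v := by
    intro u v
    exact intInt_of_bound (hγmeas.div measurable_id) (fun x _ => hintbd x)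
  -- define β
  set β : ℝ → ℝ := fun t => L' t - ∫ τ in (1:ℝ)..t, γ τ / τ with hβdef
  have hβmeas : Measurable β :=
    hL'meas.sub (intervalIntegral.continuous_primitive (fun u v => hint u v) 1).measurable
  refine ⟨β, γ, hβmeas.comp measurable_subtype_coe, hγmeas.comp measurable_subtype_coe, ?_, ⟨Me, fun t _ => hγbd t⟩, ?_⟩
  · -- boundedness of β
    set g : ℝ → ℝ := fun s => L' s / s with hgdef
    have hgmeas : Measurable g := hL'meas.div measurable_id
    have gInt : ∀ u v : ℝ, IntervalIntegrable g volume u v := by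
      intro u v
      obtain ⟨C, hC0, hC⟩ := L'bd (max u v)
      refine intInt_of_bound hgmeas (C := C) (fun x hx => ?_)
      by_cases h1x : 1 ≤ x
      · rw [hgdef]
        calc |L' x / x| = |L' x| / |x| := abs_div _ _
          _ ≤ |L' x| := div_le_self (abs_nonneg _) (by rw [abs_of_nonneg (by linarith)]; exact h1x)
          _ ≤ C := hC x hx.2
      · simp only [hgdef, hL'def]
        rw [dif_neg (by simpa using h1x)]
        simpa using hC0
    set K : ℝ := ∫ s in (1:ℝ)..E, g s with hKdef
    refine ⟨Me + |K|, fun t ht => ?_⟩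
    have ht0 : (0:ℝ) < t := by linarith
    have htEt : t ≤ E * t := by nlinarith
    have h1Et : (1:ℝ) ≤ E * t := by nlinarith
    -- rewrite the integral
    have f1Int : IntervalIntegrable (fun τ => L' (E * τ) / τ) volume 1 t := by
      obtain ⟨C, hC0, hC⟩ := L'bd (E * t)
      refine intInt_of_bound ((hL'meas.comp (measurable_id.const_mul E)).div measurable_id) (C := C) (fun x hx => ?_)
      rw [Set.uIoc_of_le ht] at hx
      have hx1 : (1:ℝ) < x := hx.1
      calc |L' (E * x) / x| = |L' (E * x)| / |x| := abs_div _ _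
        _ ≤ |L' (E * x)| := div_le_self (abs_nonneg _) (by rw [abs_of_nonneg (by linarith)]; linarith)
        _ ≤ C := hC _ (by nlinarith [hx.2])
    have step1 : (∫ τ in (1:ℝ)..t, γ τ / τ) = (∫ τ in (1:ℝ)..t, L' (E * τ) / τ) - ∫ τ in (1:ℝ)..t, g τ := by
      rw [← intervalIntegral.integral_sub f1Int (gInt 1 t)]
      refine intervalIntegral.integral_congr ?_
      intro τ hτ
      rw [Set.uIcc_of_le ht] at hτ
      have hτ1 : (1:ℝ) ≤ τ := hτ.1
      have hτ0 : (0:ℝ) < τ := by linarith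
      show γ τ / τ = L' (E * τ) / τ - g τ
      have hγτ : γ τ = L' (E * τ) - L' τ := by
        rw [hγdef]; exact Set.indicator_of_mem hτ1 _
      rw [hγτ]
      simp only [hgdef]
      exact sub_div _ _ _
    have step2 : (∫ τ in (1:ℝ)..t, L' (E * τ) / τ) = ∫ s in E..(E * t), g s := by
      have hcongr : (∫ τ in (1:ℝ)..t, L' (E * τ) / τ) = ∫ τ in (1:ℝ)..t, E * g (E * τ) := by
        refine intervalIntegral.integral_congr ?_
        intro τ hτ
        rw [Set.uIcc_of_le ht] at hτ
        have hτ0 : (0:ℝ) < τ := by linarith [hτ.1]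
        show L' (E * τ) / τ = E * g (E * τ)
        simp only [hgdef]
        field_simp
      rw [hcongr, intervalIntegral.integral_const_mul, ← smul_eq_mul,
        intervalIntegral.smul_integral_comp_mul_left g E, mul_one]
    have chasles1 : (∫ s in (1:ℝ)..(E*t), g s) - ∫ s in (1:ℝ)..E, g s = ∫ s in E..(E*t), g s :=
      intervalIntegral.integral_interval_sub_left (gInt 1 (E*t)) (gInt 1 E)
    have chasles2 : (∫ s in (1:ℝ)..(E*t), g s) - ∫ s in (1:ℝ)..t, g s = ∫ s in t..(E*t), g s :=
      intervalIntegral.integral_interval_sub_left (gInt 1 (E*t)) (gInt 1 t)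
    have step3 : (∫ τ in (1:ℝ)..t, γ τ / τ) = (∫ s in t..(E*t), g s) - K := by
      rw [step1, step2, hKdef]; linarith
    -- now: β t = (L t - ∫_t^{Et} g) + K
    have hconstInt : IntervalIntegrable (fun s => Real.log (α t) * (1 / s)) volume t (E * t) := by
      refine intInt_of_bound (measurable_const.mul (measurable_const.div measurable_id))
        (C := |Real.log (α t)|) (fun x hx => ?_)
      rw [Set.uIoc_of_le htEt] at hx
      have hx1 : (1:ℝ) ≤ x := by linarith [hx.1]
      have hx0 : (0:ℝ) < x := by linarith
      have h1x : |1 / x| = 1 / x := abs_of_pos (by positivity)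
      calc |Real.log (α t) * (1 / x)| = |Real.log (α t)| * (1 / x) := by
            rw [abs_mul, h1x]
        _ ≤ |Real.log (α t)| * 1 := by
            refine mul_le_mul_of_nonneg_left ?_ (abs_nonneg _)
            rw [div_le_one hx0]; exact hx1
        _ = |Real.log (α t)| := mul_one _
    have hone : (∫ s in t..(E*t), (1:ℝ) / s) = 1 := by
      rw [integral_one_div (by
        intro h0
        rw [Set.uIcc_of_le htEt] at h0
        linarith [h0.1])]
      rw [mul_div_assoc, div_self ht0.ne', mul_one, hEdef, Real.log_exp]
    have hLt : Real.log (α t) = ∫ s in t..(E*t), Real.log (α t) * (1 / s) := by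
      rw [intervalIntegral.integral_const_mul, hone, mul_one]
    have hdiffInt := hconstInt.sub (gInt t (E*t))
    have key : |Real.log (α t) - ∫ s in t..(E*t), g s| ≤ Me := by
      have heq2 : Real.log (α t) - (∫ s in t..(E*t), g s)
          = ∫ s in t..(E*t), (Real.log (α t) * (1 / s) - g s) := by
        rw [intervalIntegral.integral_sub hconstInt (gInt t (E*t)), ← hLt]
      rw [heq2]
      have hMeInt : IntervalIntegrable (fun s => Me * (1 / s)) volume t (E * t) := by
        refine intInt_of_bound (measurable_const.mul (measurable_const.div measurable_id))
          (C := Me) (fun x hx => ?_)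
        rw [Set.uIoc_of_le htEt] at hx
        have hx1 : (1:ℝ) ≤ x := by linarith [hx.1]
        have hx0 : (0:ℝ) < x := by linarith
        calc |Me * (1 / x)| = Me * (1 / x) := abs_of_nonneg (mul_nonneg hMe0 (by positivity))
          _ ≤ Me * 1 := by
            refine mul_le_mul_of_nonneg_left ?_ hMe0
            rw [div_le_one hx0]; exact hx1
          _ = Me := mul_one _
      have hbound : ∀ᵐ s ∂(volume.restrict (Set.uIoc t (E*t))),
          ‖Real.log (α t) * (1 / s) - g s‖ ≤ Me * (1 / s) := by
        refine ae_restrict_of_forall_mem measurableSet_uIoc (fun s hs => ?_)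
        rw [Set.uIoc_of_le htEt] at hs
        have hs1 : (1:ℝ) ≤ s := by linarith [hs.1]
        have hs0 : (0:ℝ) < s := by linarith
        have hls : |Real.log (α t) - Real.log (α s)| ≤ Me := by
          have := hMe t s ht hs.1.le hs.2
          rw [abs_sub_comm] at this; exact this
        have : Real.log (α t) * (1 / s) - g s = (Real.log (α t) - Real.log (α s)) / s := by
          simp only [hgdef]
          rw [hL'eq s hs1]
          field_simp
        rw [this, Real.norm_eq_abs, abs_div, abs_of_pos hs0, div_le_iff₀ hs0]
        calc |Real.log (α t) - Real.log (α s)| ≤ Me := hls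
          _ = Me * (1/s) * s := by field_simp
      have := intervalIntegral.norm_integral_le_of_norm_le htEt (by rw [← Set.uIoc_of_le htEt]; exact (ae_restrict_iff' measurableSet_uIoc).mp hbound) hMeInt
      rw [Real.norm_eq_abs] at this
      refine this.trans ?_
      rw [intervalIntegral.integral_const_mul, hone, mul_one]
    -- conclude
    have hβt : β t = (Real.log (α t) - ∫ s in t..(E*t), g s) + K := by
      simp only [hβdef]
      rw [hL'eq t ht, step3]; ring
    rw [hβt]
    calc |(Real.log (α t) - ∫ s in t..(E*t), g s) + K|
        ≤ |Real.log (α t) - ∫ s in t..(E*t), g s| + |K| := abs_add_le _ _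
      _ ≤ Me + |K| := by linarith
  · intro t ht
    have : β t + ∫ τ in (1:ℝ)..t, γ τ / τ = L' t := by simp only [hβdef]; ring
    rw [this, hL'eq t ht, Real.exp_log (hpos t ht)]

lemma backward_RO {α β γ : ℝ → ℝ}
    (hpos : ∀ t : ℝ, 1 ≤ t → 0 < α t)
    (hγm : Measurable (fun t : Set.Ici (1 : ℝ) => γ t.1))
    {Mb : ℝ} (hMb : ∀ t : ℝ, 1 ≤ t → |β t| ≤ Mb)
    {Mg : ℝ} (hMg : ∀ t : ℝ, 1 ≤ t → |γ t| ≤ Mg)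
    (hrep : ∀ t : ℝ, 1 ≤ t → α t = Real.exp (β t + ∫ τ in (1 : ℝ)..t, γ τ / τ)) :
    ∃ b : ℝ, 1 < b ∧ ∃ c : ℝ, 1 ≤ c ∧ ∀ t : ℝ, 1 ≤ t → ∀ l : ℝ, 1 ≤ l → l ≤ b →
      c⁻¹ ≤ α (l * t) / α t ∧ α (l * t) / α t ≤ c := by
  classical
  have hMb0 : 0 ≤ Mb := (abs_nonneg _).trans (hMb 1 le_rfl)
  have hMg0 : 0 ≤ Mg := (abs_nonneg _).trans (hMg 1 le_rfl)
  have hlog2 : 0 ≤ Real.log 2 := Real.log_nonneg one_le_two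
  set R : ℝ := 2 * Mb + Mg * Real.log 2 with hRdef
  have hR0 : 0 ≤ R := by positivity
  refine ⟨2, one_lt_two, Real.exp R, Real.one_le_exp hR0, ?_⟩
  set g' : ℝ → ℝ := fun τ => if hτ : τ ∈ Set.Ici (1:ℝ) then γ τ / τ else 0 with hg'def
  have hg'meas : Measurable g' :=
    Measurable.dite (s := Set.Ici (1:ℝ)) (hγm.div measurable_subtype_coe)
      measurable_const measurableSet_Ici
  have hg'eq : ∀ τ : ℝ, 1 ≤ τ → g' τ = γ τ / τ := fun τ hτ => dif_pos (Set.mem_Ici.mpr hτ)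
  have hg'bd : ∀ x : ℝ, |g' x| ≤ Mg := by
    intro x
    by_cases hx : 1 ≤ x
    · rw [hg'eq x hx, abs_div]
      calc |γ x| / |x| ≤ |γ x| := div_le_self (abs_nonneg _) (by rw [abs_of_nonneg (by linarith)]; exact hx)
        _ ≤ Mg := hMg x hx
    · rw [hg'def]
      simp only []
      rw [dif_neg (by simpa using hx)]
      simpa using hMg0
  have hg'int : ∀ u v : ℝ, IntervalIntegrable g' volume u v := fun u v =>
    intInt_of_bound hg'meas (C := Mg) (fun x _ => hg'bd x)
  have hI : ∀ t : ℝ, 1 ≤ t → (∫ τ in (1:ℝ)..t, γ τ / τ) = ∫ τ in (1:ℝ)..t, g' τ := by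
    intro t ht
    refine intervalIntegral.integral_congr (fun τ hτ => ?_)
    rw [Set.uIcc_of_le ht] at hτ
    exact (hg'eq τ hτ.1).symm
  intro t ht l hl1 hl2
  have hlt : (1:ℝ) ≤ l * t := by nlinarith
  have htlt : t ≤ l * t := by nlinarith
  have hratio : α (l * t) / α t = Real.exp ((β (l * t) - β t) + ∫ τ in t..(l * t), g' τ) := by
    rw [hrep t ht, hrep (l * t) hlt, hI t ht, hI (l * t) hlt, ← Real.exp_sub]
    congr 1
    have := intervalIntegral.integral_interval_sub_left (hg'int 1 (l * t)) (hg'int 1 t)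
    linarith
  have hintbd : |∫ τ in t..(l * t), g' τ| ≤ Mg * Real.log 2 := by
    have hMgInt : IntervalIntegrable (fun s => Mg * (1 / s)) volume t (l * t) := by
      refine intInt_of_bound (measurable_const.mul (measurable_const.div measurable_id))
        (C := Mg) (fun x hx => ?_)
      rw [Set.uIoc_of_le htlt] at hx
      have hx1 : (1:ℝ) ≤ x := by linarith [hx.1]
      have hx0 : (0:ℝ) < x := by linarith
      calc |Mg * (1 / x)| = Mg * (1 / x) := abs_of_nonneg (mul_nonneg hMg0 (by positivity))
        _ ≤ Mg * 1 := mul_le_mul_of_nonneg_left (by rw [div_le_one hx0]; exact hx1) hMg0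
        _ = Mg := mul_one _
    have hbound : ∀ᵐ s ∂(volume.restrict (Set.uIoc t (l * t))), ‖g' s‖ ≤ Mg * (1 / s) := by
      refine ae_restrict_of_forall_mem measurableSet_uIoc (fun s hs => ?_)
      rw [Set.uIoc_of_le htlt] at hs
      have hs1 : (1:ℝ) ≤ s := by linarith [hs.1]
      have hs0 : (0:ℝ) < s := by linarith
      rw [Real.norm_eq_abs, hg'eq s hs1, abs_div, abs_of_pos hs0, div_le_iff₀ hs0]
      calc |γ s| ≤ Mg := hMg s hs1
        _ = Mg * (1 / s) * s := by field_simp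
    have h1 := intervalIntegral.norm_integral_le_of_norm_le htlt (by rw [← Set.uIoc_of_le htlt]; exact (ae_restrict_iff' measurableSet_uIoc).mp hbound) hMgInt
    rw [Real.norm_eq_abs] at h1
    refine h1.trans ?_
    have ht0 : (0:ℝ) < t := by linarith
    have hval : (∫ s in t..(l * t), Mg * (1 / s)) = Mg * Real.log l := by
      rw [intervalIntegral.integral_const_mul, integral_one_div (by
        intro h0
        rw [Set.uIcc_of_le htlt] at h0
        linarith [h0.1]), mul_div_assoc, div_self ht0.ne', mul_one]
    rw [hval]
    have hll : 0 ≤ Real.log l := Real.log_nonneg hl1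
    exact mul_le_mul_of_nonneg_left (Real.log_le_log (by linarith) hl2) hMg0
  have hexp : |(β (l * t) - β t) + ∫ τ in t..(l * t), g' τ| ≤ R := by
    have h1 := hMb t ht
    have h2 := hMb (l * t) hlt
    have h3 := abs_sub (β (l * t)) (β t)
    calc |(β (l * t) - β t) + ∫ τ in t..(l * t), g' τ|
        ≤ |β (l * t) - β t| + |∫ τ in t..(l * t), g' τ| := abs_add_le _ _
      _ ≤ (|β (l * t)| + |β t|) + Mg * Real.log 2 := by
          linarith [abs_sub (β (l * t)) (β t), hintbd]
      _ ≤ R := by rw [hRdef]; linarith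
  obtain ⟨he1, he2⟩ := abs_le.mp hexp
  constructor
  · rw [hratio, ← Real.exp_neg]
    exact Real.exp_le_exp.mpr he1
  · rw [hratio]
    exact Real.exp_le_exp.mpr he2

end Helpers

/-- Integral description of the class RO: a Borel measurable positive function `α` on
`[1,∞)` is RO-varying iff `α t = exp (β t + ∫₁ᵗ γ τ / τ dτ)` for all `t ≥ 1`, for some
Borel measurable bounded functions `β γ : [1,∞) → ℝ`. -/
theorem stmt1 (α : ℝ → ℝ) :
    IsRO α ↔
      (Measurable (fun t : Set.Ici (1 : ℝ) => α t.1) ∧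
        (∀ t : ℝ, 1 ≤ t → 0 < α t) ∧
        ∃ β γ : ℝ → ℝ,
          Measurable (fun t : Set.Ici (1 : ℝ) => β t.1) ∧
          Measurable (fun t : Set.Ici (1 : ℝ) => γ t.1) ∧
          (∃ Mb : ℝ, ∀ t : ℝ, 1 ≤ t → |β t| ≤ Mb) ∧
          (∃ Mg : ℝ, ∀ t : ℝ, 1 ≤ t → |γ t| ≤ Mg) ∧
          ∀ t : ℝ, 1 ≤ t → α t = Real.exp (β t + ∫ τ in (1 : ℝ)..t, γ τ / τ)) := by
  constructor
  · rintro ⟨hmeas, hpos, b, hb, c, hc, hRO⟩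
    exact ⟨hmeas, hpos, forward_rep hmeas hpos hb hc hRO⟩
  · rintro ⟨hmeas, hpos, β, γ, hβm, hγm, ⟨Mb, hMb⟩, ⟨Mg, hMg⟩, hrep⟩
    exact ⟨hmeas, hpos, backward_RO hpos hγm hMb hMg hrep⟩
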